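/- Let Y be a real random variable with E(Y²) < ∞ and let W := Y − Y′, where Y′ is an independent copy of Y. Then for every θ ≠ 0: |E(e^{iθY})|² ≤ 1 − (2θ²/π²)·E(W²·1_{[|W| ≤ π/|θ|]}). -/

import Mathlib

open MeasureTheory ProbabilityTheory

private lemma int_bdd {Ω : Type*} [MeasurableSpace Ω] (P : Measure Ω) [IsProbabilityMeasure P]
    {f : Ω → ℝ} (hf : Measurable f) (C : ℝ) (h : ∀ ω, |f ω| ≤ C) : Integrable f P :=
  (integrable_const C).mono' hf.aestronglyMeasurable (Filter.Eventually.of_forall fun ω => by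
    simpa [Real.norm_eq_abs] using h ω)

theorem symmetrization_char_fn_bound
    {Ω : Type*} [MeasurableSpace Ω] (P : Measure Ω) [IsProbabilityMeasure P]
    (Y Y' : Ω → ℝ) (hY : Measurable Y) (hY' : Measurable Y')
    (hsq : Integrable (fun ω => (Y ω)^2) P)
    (hindep : IndepFun Y Y' P)
    (hid : IdentDistrib Y Y' P P)
    (θ : ℝ) (hθ : θ ≠ 0) :
    ‖∫ ω, Complex.exp (Complex.I * (θ : ℂ) * (Y ω : ℂ)) ∂P‖^2 ≤
      1 - (2 * θ^2 / Real.pi^2) *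
        ∫ ω, (if |Y ω - Y' ω| ≤ Real.pi / |θ| then (Y ω - Y' ω)^2 else 0) ∂P := by
  have πpos := Real.pi_pos
  have hθa : (0:ℝ) < |θ| := abs_pos.mpr hθ
  -- measurability of building blocks
  have mcos : Measurable fun x : ℝ => Real.cos (θ * x) :=
    Real.measurable_cos.comp (measurable_const.mul measurable_id)
  have msin : Measurable fun x : ℝ => Real.sin (θ * x) :=
    Real.measurable_sin.comp (measurable_const.mul measurable_id)
  -- integrability of bounded trig functions
  have icosY : Integrable (fun ω => Real.cos (θ * Y ω)) P :=
    int_bdd P (mcos.comp hY) 1 fun ω => Real.abs_cos_le_one _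
  have icosY' : Integrable (fun ω => Real.cos (θ * Y' ω)) P :=
    int_bdd P (mcos.comp hY') 1 fun ω => Real.abs_cos_le_one _
  have isinY : Integrable (fun ω => Real.sin (θ * Y ω)) P :=
    int_bdd P (msin.comp hY) 1 fun ω => Real.abs_sin_le_one _
  have isinY' : Integrable (fun ω => Real.sin (θ * Y' ω)) P :=
    int_bdd P (msin.comp hY') 1 fun ω => Real.abs_sin_le_one _
  have icc : Integrable (fun ω => Real.cos (θ * Y ω) * Real.cos (θ * Y' ω)) P :=
    int_bdd P ((mcos.comp hY).mul (mcos.comp hY')) 1 fun ω => by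
      rw [abs_mul]
      exact mul_le_one₀ (Real.abs_cos_le_one _) (abs_nonneg _) (Real.abs_cos_le_one _)
  have iss : Integrable (fun ω => Real.sin (θ * Y ω) * Real.sin (θ * Y' ω)) P :=
    int_bdd P ((msin.comp hY).mul (msin.comp hY')) 1 fun ω => by
      rw [abs_mul]
      exact mul_le_one₀ (Real.abs_sin_le_one _) (abs_nonneg _) (Real.abs_sin_le_one _)
  have icosW : Integrable (fun ω => Real.cos (θ * (Y ω - Y' ω))) P :=
    int_bdd P (mcos.comp (hY.sub hY')) 1 fun ω => Real.abs_cos_le_one _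
  -- the complex integrand
  set f : Ω → ℂ := fun ω => Complex.exp (Complex.I * (θ : ℂ) * (Y ω : ℂ)) with hfdef
  have hfre : ∀ ω, f ω = Complex.cos (θ * Y ω : ℝ) + Complex.sin (θ * Y ω : ℝ) * Complex.I := by
    intro ω
    have : Complex.I * (θ : ℂ) * (Y ω : ℂ) = ((θ * Y ω : ℝ) : ℂ) * Complex.I := by
      push_cast; ring
    rw [hfdef]; simp only [this, Complex.exp_mul_I]
  have hfmeas : Measurable f := by
    apply Complex.measurable_exp.comp
    exact (measurable_const.mul (Complex.measurable_ofReal.comp hY))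
  have hfint : Integrable f P := by
    refine (integrable_const (1:ℝ)).mono' hfmeas.aestronglyMeasurable
      (Filter.Eventually.of_forall fun ω => ?_)
    rw [hfre ω]
    rw [show Complex.cos (θ * Y ω : ℝ) + Complex.sin (θ * Y ω : ℝ) * Complex.I
        = Complex.exp (((θ * Y ω : ℝ) : ℂ) * Complex.I) from (Complex.exp_mul_I _).symm]
    simp [Complex.norm_exp]
  have hre : (∫ ω, f ω ∂P).re = ∫ ω, Real.cos (θ * Y ω) ∂P := by
    rw [← RCLike.re_eq_complex_re, ← integral_re hfint]
    refine integral_congr_ae (Filter.Eventually.of_forall fun ω => ?_)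
    simp only [hfre, RCLike.re_to_complex, Complex.add_re, Complex.mul_re,
      Complex.cos_ofReal_re, Complex.sin_ofReal_im, Complex.I_re, Complex.I_im,
      Complex.sin_ofReal_re, Complex.cos_ofReal_im]
    ring
  have him : (∫ ω, f ω ∂P).im = ∫ ω, Real.sin (θ * Y ω) ∂P := by
    rw [← RCLike.im_eq_complex_im, ← integral_im hfint]
    refine integral_congr_ae (Filter.Eventually.of_forall fun ω => ?_)
    simp only [hfre, RCLike.im_to_complex, Complex.add_im, Complex.mul_im,
      Complex.cos_ofReal_re, Complex.sin_ofReal_im, Complex.I_re, Complex.I_im,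
      Complex.sin_ofReal_re, Complex.cos_ofReal_im]
    ring
  -- identically distributed: replace Y by Y'
  have hA' : ∫ ω, Real.cos (θ * Y ω) ∂P = ∫ ω, Real.cos (θ * Y' ω) ∂P :=
    (hid.comp mcos).integral_eq
  have hB' : ∫ ω, Real.sin (θ * Y ω) ∂P = ∫ ω, Real.sin (θ * Y' ω) ∂P :=
    (hid.comp msin).integral_eq
  -- independence: products
  have hcc : ∫ ω, Real.cos (θ * Y ω) * Real.cos (θ * Y' ω) ∂P
      = (∫ ω, Real.cos (θ * Y ω) ∂P) * ∫ ω, Real.cos (θ * Y' ω) ∂P :=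
    (hindep.comp mcos mcos).integral_fun_mul_eq_mul_integral icosY.aestronglyMeasurable icosY'.aestronglyMeasurable
  have hss : ∫ ω, Real.sin (θ * Y ω) * Real.sin (θ * Y' ω) ∂P
      = (∫ ω, Real.sin (θ * Y ω) ∂P) * ∫ ω, Real.sin (θ * Y' ω) ∂P :=
    (hindep.comp msin msin).integral_fun_mul_eq_mul_integral isinY.aestronglyMeasurable isinY'.aestronglyMeasurable
  -- key identity: ‖∫ f‖² = ∫ cos(θ(Y - Y'))
  have key : ‖∫ ω, f ω ∂P‖^2 = ∫ ω, Real.cos (θ * (Y ω - Y' ω)) ∂P := by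
    have h1 : ‖∫ ω, f ω ∂P‖^2
        = (∫ ω, Real.cos (θ * Y ω) ∂P)^2 + (∫ ω, Real.sin (θ * Y ω) ∂P)^2 := by
      rw [← hre, ← him, Complex.sq_norm, Complex.normSq_apply]
      ring
    rw [h1]
    have h2 : ∫ ω, Real.cos (θ * (Y ω - Y' ω)) ∂P
        = ∫ ω, (Real.cos (θ * Y ω) * Real.cos (θ * Y' ω)
            + Real.sin (θ * Y ω) * Real.sin (θ * Y' ω)) ∂P := by
      refine integral_congr_ae (Filter.Eventually.of_forall fun ω => ?_)
      simp only [mul_sub, Real.cos_sub]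
    rw [h2, integral_add icc iss, hcc, hss, ← hA', ← hB']
    ring
  rw [key]
  -- the pointwise inequality
  set c : ℝ := 2 * θ^2 / Real.pi^2 with hc
  set g : Ω → ℝ := fun ω => if |Y ω - Y' ω| ≤ Real.pi / |θ| then (Y ω - Y' ω)^2 else 0
    with hgdef
  have hgmeas : Measurable g := by
    refine Measurable.ite ?_ ((hY.sub hY').pow_const 2) measurable_const
    exact measurableSet_le (hY.sub hY').abs measurable_const
  have hgint : Integrable g P := by
    refine int_bdd P hgmeas ((Real.pi / |θ|)^2) fun ω => ?_
    by_cases h : |Y ω - Y' ω| ≤ Real.pi / |θ|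
    · simp only [hgdef, if_pos h]
      rw [abs_of_nonneg (sq_nonneg _), ← sq_abs]
      exact pow_le_pow_left₀ (abs_nonneg _) h 2
    · simp only [hgdef, if_neg h, abs_zero]
      positivity
  have hpt : ∀ ω, c * g ω ≤ 1 - Real.cos (θ * (Y ω - Y' ω)) := by
    intro ω
    set w := Y ω - Y' ω with hw
    by_cases h : |w| ≤ Real.pi / |θ|
    · have habs : |θ * w| ≤ Real.pi := by
        rw [abs_mul]
        calc |θ| * |w| ≤ |θ| * (Real.pi / |θ|) :=
              mul_le_mul_of_nonneg_left h hθa.le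
          _ = Real.pi := by field_simp
      have hcb := Real.cos_le_one_sub_mul_cos_sq habs
      have heq : 2 / Real.pi^2 * (θ * w)^2 = c * w^2 := by rw [hc]; ring
      have : g ω = w^2 := if_pos h
      rw [this]
      linarith [heq ▸ hcb]
    · have : g ω = 0 := if_neg h
      rw [this, mul_zero]
      linarith [Real.cos_le_one (θ * w)]
  have hmono : ∫ ω, c * g ω ∂P ≤ ∫ ω, (1 - Real.cos (θ * (Y ω - Y' ω))) ∂P :=
    integral_mono (hgint.const_mul c) ((integrable_const 1).sub icosW)
      fun ω => hpt ω
  rw [integral_const_mul, integral_sub (integrable_const 1) icosW, integral_const] at hmono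
  simp only [probReal_univ, measure_univ, ENNReal.toReal_one, smul_eq_mul, one_mul] at hmono
  linarith
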